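/- Let h^* minimize L(f) = ‖f‖·sqrt(2α·log(√α‖f‖/b + 1)) + q(f) over a real Hilbert space H, where α, b > 0 and q : H → ℝ satisfies q(f) ≥ q_min for all f and L(h^*) ≤ L(0) = q(0). Assume q ≥ 0. Then √α·‖h^*‖ ≤ 2^{−1/2}·q(0) + b. -/

import Mathlib

theorem stmt_14 {H : Type*} [NormedAddCommGroup H] [InnerProductSpace ℝ H]
    (α b : ℝ) (hα : 0 < α) (hb : 0 < b)
    (q : H → ℝ) (hq : ∀ f, 0 ≤ q f) (hstar : H)
    (hmin : ∀ f : H,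
      ‖hstar‖ * Real.sqrt (2 * α * Real.log (Real.sqrt α * ‖hstar‖ / b + 1)) + q hstar ≤
        ‖f‖ * Real.sqrt (2 * α * Real.log (Real.sqrt α * ‖f‖ / b + 1)) + q f) :
    Real.sqrt α * ‖hstar‖ ≤ (2 : ℝ) ^ (-(1 / 2) : ℝ) * q 0 + b := by
  set n : ℝ := ‖hstar‖ with hn
  have hn0 : 0 ≤ n := norm_nonneg _
  have hsa : 0 < Real.sqrt α := Real.sqrt_pos.mpr hα
  set y : ℝ := Real.sqrt α * n with hy
  have hy0 : 0 ≤ y := by positivity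
  set x : ℝ := y / b with hx
  have hx0 : 0 ≤ x := by positivity
  -- step 1: from hmin 0
  have h1 : n * Real.sqrt (2 * α * Real.log (x + 1)) ≤ q 0 := by
    have := hmin 0
    simp only [norm_zero, zero_mul, zero_div, zero_add, mul_zero, zero_add,
      Real.log_one, Real.sqrt_zero] at this
    linarith [hq hstar]
  -- step 2: log lower bound
  have hlog : x / (x + 1) ≤ Real.log (x + 1) := by
    have h := Real.one_sub_inv_le_log_of_pos (x := x + 1) (by linarith)
    have : 1 - (x + 1)⁻¹ = x / (x + 1) := by
      field_simp
      ring
    linarith [this ▸ h]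
  -- step 3: sqrt lower bound
  have hsq : Real.sqrt 2 * Real.sqrt α * (x / (x + 1)) ≤
      Real.sqrt (2 * α * Real.log (x + 1)) := by
    have hxx : x / (x + 1) ≤ 1 := by
      rw [div_le_one (by linarith)]; linarith
    calc Real.sqrt 2 * Real.sqrt α * (x / (x + 1))
        = Real.sqrt (2 * α) * (x / (x + 1)) := by
          rw [Real.sqrt_mul (by norm_num)]
      _ ≤ Real.sqrt (2 * α) * Real.sqrt (x / (x + 1)) := by
          apply mul_le_mul_of_nonneg_left _ (Real.sqrt_nonneg _)
          nlinarith [Real.sq_sqrt (div_nonneg hx0 (by linarith : (0:ℝ) ≤ x + 1)),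
            Real.sqrt_nonneg (x / (x + 1)),
            Real.sqrt_le_sqrt hxx, Real.sqrt_one]
      _ = Real.sqrt (2 * α * (x / (x + 1))) := by
          rw [Real.sqrt_mul (by positivity : (0:ℝ) ≤ 2 * α), Real.sqrt_mul (by norm_num : (0:ℝ) ≤ 2)]
      _ ≤ Real.sqrt (2 * α * Real.log (x + 1)) :=
          Real.sqrt_le_sqrt (mul_le_mul_of_nonneg_left hlog (by positivity))
  -- combine: √2 y² ≤ q0 (y + b)
  have h2 : Real.sqrt 2 * y ^ 2 ≤ q 0 * (y + b) := by
    have hmono : n * (Real.sqrt 2 * Real.sqrt α * (x / (x + 1))) ≤ q 0 :=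
      le_trans (mul_le_mul_of_nonneg_left hsq hn0) h1
    have hkey : n * (Real.sqrt 2 * Real.sqrt α * (x / (x + 1))) =
        Real.sqrt 2 * y ^ 2 / (y + b) := by
      rw [hx, hy]
      field_simp
    rw [hkey] at hmono
    rw [div_le_iff₀ (by linarith)] at hmono
    linarith
  -- final quadratic
  have hrw : (2 : ℝ) ^ (-(1 / 2) : ℝ) = (Real.sqrt 2)⁻¹ := by
    rw [Real.rpow_neg (by norm_num : (0:ℝ) ≤ 2), ← Real.sqrt_eq_rpow]
  rw [hrw]
  have hs2 : (0:ℝ) < Real.sqrt 2 := by positivity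
  have hs2sq : Real.sqrt 2 ^ 2 = 2 := Real.sq_sqrt (by norm_num)
  by_contra hcon
  push_neg at hcon
  have hq0 : 0 ≤ q 0 := hq 0
  have h3 : (Real.sqrt 2)⁻¹ * q 0 + b < y := hcon
  have h4 : q 0 + Real.sqrt 2 * b < Real.sqrt 2 * y := by
    have := mul_lt_mul_of_pos_left h3 hs2
    rw [mul_add, ← mul_assoc, mul_inv_cancel₀ (ne_of_gt hs2), one_mul] at this
    exact this
  nlinarith [mul_pos hs2 hb, mul_lt_mul_of_pos_left h3 hs2, sq_nonneg y]
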